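/- arXiv:1606.03967 — 4 statements merged into one kernel-verified Lean document; each statement's English description precedes it below -/
import Mathlib

section
/- For every Hilbert space H with dim(H) > 2 (in particular ℂⁿ with n ≥ 3), there is no function w from the unit vectors of H to {0,1} such that for every orthonormal basis {x₁,…,xₙ}, the values w(xᵢ) sum to 1. -/
open scoped BigOperators

namespace KSP
noncomputable section

local notation "⟪" x ", " y "⟫" => @inner ℂ _ _ x y

variable {n : ℕ}

abbrev Vn (n : ℕ) := EuclideanSpace ℂ (Fin n)

lemma inner_swap_zero {x y : Vn n} (h : ⟪x, y⟫ = 0) : ⟪y, x⟫ = 0 := by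
  rw [← inner_conj_symm, h, map_zero]

lemma inner_self_one {x : Vn n} (hx : ‖x‖ = 1) : ⟪x, x⟫ = 1 := by
  rw [inner_self_eq_norm_sq_to_K, hx]; norm_num

lemma norm_one_of_inner {x : Vn n} (hx : ⟪x, x⟫ = 1) : ‖x‖ = 1 := by
  have h := inner_self_eq_norm_sq (𝕜 := ℂ) x
  rw [hx] at h
  simp at h
  nlinarith [norm_nonneg x, h]

lemma inner_combo (e1 e2 e3 : Vn n)
    (h11 : ⟪e1, e1⟫ = 1) (h22 : ⟪e2, e2⟫ = 1) (h33 : ⟪e3, e3⟫ = 1)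
    (h12 : ⟪e1, e2⟫ = 0) (h13 : ⟪e1, e3⟫ = 0) (h23 : ⟪e2, e3⟫ = 0)
    (a1 a2 a3 b1 b2 b3 : ℝ) :
    ⟪((a1 : ℝ) : ℂ) • e1 + ((a2 : ℝ) : ℂ) • e2 + ((a3 : ℝ) : ℂ) • e3,
      ((b1 : ℝ) : ℂ) • e1 + ((b2 : ℝ) : ℂ) • e2 + ((b3 : ℝ) : ℂ) • e3⟫
      = ((a1*b1 + a2*b2 + a3*b3 : ℝ) : ℂ) := by
  have h21 : ⟪e2, e1⟫ = 0 := inner_swap_zero h12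
  have h31 : ⟪e3, e1⟫ = 0 := inner_swap_zero h13
  have h32 : ⟪e3, e2⟫ = 0 := inner_swap_zero h23
  simp only [inner_add_left, inner_add_right, inner_smul_left, inner_smul_right,
    h11, h22, h33, h12, h13, h23, h21, h31, h32, Complex.conj_ofReal]
  push_cast
  ring

/-- normalized value of `w` -/
def what (w : Vn n → ℝ) (x : Vn n) : ℝ := w ((((‖x‖)⁻¹ : ℝ) : ℂ) • x)

lemma what_unit {w : Vn n → ℝ} {x : Vn n} (hx : ‖x‖ = 1) : what w x = w x := by
  rw [what, hx]
  norm_num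

lemma norm_normalize {x : Vn n} (hx : x ≠ 0) : ‖(((‖x‖)⁻¹ : ℝ) : ℂ) • x‖ = 1 := by
  rw [norm_smul, Complex.norm_real, Real.norm_eq_abs, abs_of_nonneg (by positivity)]
  exact inv_mul_cancel₀ (norm_ne_zero_iff.2 hx)

lemma what01 {w : Vn n → ℝ}
    (h01 : ∀ x : Vn n, ‖x‖ = 1 → w x = 0 ∨ w x = 1)
    {x : Vn n} (hx : x ≠ 0) : what w x = 0 ∨ what w x = 1 :=
  h01 _ (norm_normalize hx)

/-- Every orthonormal basis has exactly one vector of value 1. -/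
lemma exists_one {w : Vn n → ℝ}
    (h01 : ∀ x : Vn n, ‖x‖ = 1 → w x = 0 ∨ w x = 1)
    (hsum : ∀ b : OrthonormalBasis (Fin n) ℂ (Vn n), ∑ i, w (b i) = 1)
    (b : OrthonormalBasis (Fin n) ℂ (Vn n)) :
    ∃ j, w (b j) = 1 ∧ ∀ i, i ≠ j → w (b i) = 0 := by
  have hv : ∀ i, w (b i) = 0 ∨ w (b i) = 1 := fun i => h01 _ (b.orthonormal.1 i)
  have hnn : ∀ i, 0 ≤ w (b i) := by
    intro i; rcases hv i with h | h <;> rw [h] <;> norm_num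
  obtain ⟨j, hj⟩ : ∃ j, w (b j) = 1 := by
    by_contra h
    push_neg at h
    have h0 : ∀ i ∈ Finset.univ, w (b i) = 0 := fun i _ => (hv i).resolve_right (h i)
    have := hsum b
    rw [Finset.sum_eq_zero h0] at this
    norm_num at this
  refine ⟨j, hj, ?_⟩
  intro i hij
  by_contra h
  have hi1 : w (b i) = 1 := (hv i).resolve_left h
  have hle : ∑ k ∈ ({i, j} : Finset (Fin n)), w (b k) ≤ ∑ k, w (b k) :=
    Finset.sum_le_sum_of_subset_of_nonneg (Finset.subset_univ _) (fun k _ _ => hnn k)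
  rw [Finset.sum_pair hij, hsum b, hi1, hj] at hle
  norm_num at hle

/-- The triple rule: an orthonormal triple orthogonal to the tail of `g` has `w`-sum 1. -/
lemma triple_unit (hn : 3 ≤ n) {w : Vn n → ℝ}
    (hsum : ∀ b : OrthonormalBasis (Fin n) ℂ (Vn n), ∑ i, w (b i) = 1)
    (g : Fin n → Vn n) (hg : Orthonormal ℂ g)
    (hg0 : ∀ i : Fin n, 3 ≤ (i : ℕ) → w (g i) = 0)
    (x y z : Vn n) (hxu : ‖x‖ = 1) (hyu : ‖y‖ = 1) (hzu : ‖z‖ = 1)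
    (hxy : ⟪x, y⟫ = 0) (hxz : ⟪x, z⟫ = 0) (hyz : ⟪y, z⟫ = 0)
    (hgx : ∀ i : Fin n, 3 ≤ (i : ℕ) → ⟪g i, x⟫ = 0)
    (hgy : ∀ i : Fin n, 3 ≤ (i : ℕ) → ⟪g i, y⟫ = 0)
    (hgz : ∀ i : Fin n, 3 ≤ (i : ℕ) → ⟪g i, z⟫ = 0) :
    w x + w y + w z = 1 := by
  classical
  set f : Fin n → Vn n :=
    fun i => if (i : ℕ) = 0 then x else if (i : ℕ) = 1 then y
      else if (i : ℕ) = 2 then z else g i with hf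
  have hfon : Orthonormal ℂ f := by
    constructor
    · intro i
      simp only [hf]
      split_ifs with h1 h2 h3
      · exact hxu
      · exact hyu
      · exact hzu
      · exact hg.1 i
    · intro i j hij
      have hvij : (i : ℕ) ≠ (j : ℕ) := fun h => hij (Fin.ext h)
      simp only [hf]
      split_ifs with h1 h2 h3 h4 h5 h6 h7 h8 h9 h10 h11 h12 h13 h14 h15
      all_goals first
        | omega
        | exact hxy
        | exact hxz
        | exact hyz
        | exact inner_swap_zero hxy
        | exact inner_swap_zero hxz
        | exact inner_swap_zero hyz
        | exact inner_swap_zero (hgx i (by omega))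
        | exact inner_swap_zero (hgy i (by omega))
        | exact inner_swap_zero (hgz i (by omega))
        | exact hgx i (by omega)
        | exact hgy i (by omega)
        | exact hgz i (by omega)
        | exact inner_swap_zero (hgx j (by omega))
        | exact inner_swap_zero (hgy j (by omega))
        | exact inner_swap_zero (hgz j (by omega))
        | exact hg.2 hij
  have hcard : Fintype.card (Fin n) = Module.finrank ℂ (Vn n) := by
    simp [finrank_euclideanSpace]
  have : Nonempty (Fin n) := ⟨⟨0, by omega⟩⟩
  let B := basisOfLinearIndependentOfCardEqFinrank hfon.linearIndependent hcard
  have hBc : ⇑B = f := coe_basisOfLinearIndependentOfCardEqFinrank _ _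
  let OB := B.toOrthonormalBasis (by rwa [hBc])
  have hOB : ⇑OB = f := by
    rw [Module.Basis.coe_toOrthonormalBasis, hBc]
  have hs : ∑ i, w (f i) = 1 := by
    have := hsum OB
    rwa [show (fun i => w (OB i)) = fun i => w (f i) from by rw [hOB]] at this
  set I0 : Fin n := ⟨0, by omega⟩
  set I1 : Fin n := ⟨1, by omega⟩
  set I2 : Fin n := ⟨2, by omega⟩
  have hzero : ∀ i ∈ Finset.univ, i ∉ ({I0, I1, I2} : Finset (Fin n)) → w (f i) = 0 := by
    intro i _ hi
    simp only [Finset.mem_insert, Finset.mem_singleton] at hi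
    push_neg at hi
    obtain ⟨n0, n1, n2⟩ := hi
    have v0 : (i : ℕ) ≠ 0 := fun h => n0 (Fin.ext h)
    have v1 : (i : ℕ) ≠ 1 := fun h => n1 (Fin.ext h)
    have v2 : (i : ℕ) ≠ 2 := fun h => n2 (Fin.ext h)
    simp only [hf, if_neg v0, if_neg v1, if_neg v2]
    exact hg0 i (by omega)
  have hsub := Finset.sum_subset (Finset.subset_univ ({I0, I1, I2} : Finset (Fin n)))
    (fun i hi hni => hzero i hi hni)
  rw [hs] at hsub
  have hd01 : I0 ≠ I1 := by simp [I0, I1, Fin.ext_iff]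
  have hd02 : I0 ≠ I2 := by simp [I0, I2, Fin.ext_iff]
  have hd12 : I1 ≠ I2 := by simp [I1, I2, Fin.ext_iff]
  rw [Finset.sum_insert (by simp [hd01, hd02]), Finset.sum_insert (by simp [hd12]),
    Finset.sum_singleton] at hsub
  have hf0 : f I0 = x := by simp [hf, I0]
  have hf1 : f I1 = y := by simp [hf, I1]
  have hf2 : f I2 = z := by simp [hf, I2]
  rw [hf0, hf1, hf2] at hsub
  linarith

-- constants

def r5 : ℝ := Real.sqrt 5
def C : ℝ := Real.sqrt ((5 + r5)/8)
def S : ℝ := (r5 - 1)/4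

lemma hr5 : r5^2 = 5 := Real.sq_sqrt (by norm_num)
lemma hr5pos : 0 < r5 := Real.sqrt_pos.2 (by norm_num)
lemma hr5gt : 2 < r5 := by nlinarith [hr5, hr5pos]
lemma hr5lt : r5 < 9/4 := by nlinarith [hr5, hr5pos]

lemma hC2 : C^2 = (5 + r5)/8 := Real.sq_sqrt (by nlinarith [hr5gt])
lemma hCpos : 0 < C := Real.sqrt_pos.2 (by nlinarith [hr5gt])
lemma hSpos : 0 < S := by unfold S; nlinarith [hr5gt]
lemma hS2 : S^2 = (3 - r5)/8 := by unfold S; linear_combination hr5/16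
lemma hCS : C^2 + S^2 = 1 := by rw [hC2, hS2]; ring

def Dd : ℝ := C^2 - 8*S^2
lemma hDpos : 0 < Dd := by unfold Dd; rw [hC2, hS2]; nlinarith [hr5, hr5pos]
lemma hsD2 : (Real.sqrt Dd)^2 = Dd := Real.sq_sqrt hDpos.le
lemma hsDpos : 0 < Real.sqrt Dd := Real.sqrt_pos.2 hDpos
lemma hsDltC : Real.sqrt Dd < C := by
  rw [show C = Real.sqrt (C^2) from (Real.sqrt_sq hCpos.le).symm]
  apply Real.sqrt_lt_sqrt hDpos.le
  unfold Dd; nlinarith [hSpos]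

def mm : ℝ := (C - Real.sqrt Dd)/(4*C)
lemma hmpos : 0 < mm :=
  div_pos (by linarith [hsDltC]) (by linarith [hCpos])
lemma hmlt : mm < 1 := by
  unfold mm
  rw [div_lt_one (by linarith [hCpos])]
  nlinarith [hsDpos, hCpos]

def mu : ℝ := Real.sqrt mm
def bb : ℝ := Real.sqrt (1 - mm)
lemma hmu2 : mu^2 = mm := Real.sq_sqrt hmpos.le
lemma hmupos : 0 < mu := Real.sqrt_pos.2 hmpos
lemma hbb2 : bb^2 = 1 - mm := Real.sq_sqrt (by linarith [hmlt])
lemma hbbpos : 0 < bb := Real.sqrt_pos.2 (by linarith [hmlt])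
lemma hBM : bb^2 + mu^2 = 1 := by rw [hbb2, hmu2]; ring

lemma hC0 : C ≠ 0 := ne_of_gt hCpos

lemma hmmeq : 4*C*mm = C - Real.sqrt Dd := by
  unfold mm
  rw [mul_comm]
  exact div_mul_cancel₀ _ (by nlinarith [hCpos] : (0:ℝ) < 4*C).ne'

lemma hd2 : (Real.sqrt Dd)^2 = C^2 - 8*S^2 := hsD2.trans rfl

lemma hkey : S^2 + mu^2*mu^2*C^2 - bb^2*mu^2*C^2 = 0 := by
  rw [hbb2, hmu2]
  have h16 : 16*C^2*mm^2 = (C - Real.sqrt Dd)^2 := by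
    unfold mm; field_simp [hC0]; ring
  have H : (16*C^2) * (S^2 + mm*mm*C^2 - (1-mm)*mm*C^2) = 0 := by
    linear_combination (2*C^2) * h16 - (4*C^3) * hmmeq + (2*C^2) * hd2
  have h0 : (16*C^2) ≠ 0 := by nlinarith [hCpos]
  have := (mul_eq_zero.mp H).resolve_left h0
  linarith [this]

lemma hC4 : C^4 = (15+5*r5)/32 := by
  linear_combination (C^2 + (5+r5)/8) * hC2 + (1/64)*hr5
lemma hS4 : S^4 = (7-3*r5)/32 := by
  linear_combination (S^2 + (3-r5)/8) * hS2 + (1/64)*hr5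
lemma hC2S2 : C^2*S^2 = (5-r5)/32 := by
  linear_combination S^2*hC2 + ((5+r5)/8)*hS2 - (1/64)*hr5

-- chain coefficients
def a1 : ℝ := C
def b1 : ℝ := S
def a2 : ℝ := C*a1 - S*b1
def b2 : ℝ := C*b1 + S*a1
def a3 : ℝ := C*a2 - S*b2
def b3 : ℝ := C*b2 + S*a2
def a4 : ℝ := C*a3 - S*b3
def b4 : ℝ := C*b3 + S*a3
def a5 : ℝ := C*a4 - S*b4
def b5 : ℝ := C*b4 + S*a4

lemma hSdef : 4*S = r5 - 1 := by unfold S; ring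

lemma ha5 : a5 = 0 := by
  unfold a5 b4 a4 b3 a3 b2 a2 b1 a1
  linear_combination C*hC4 - 10*C*hC2S2 + 5*C*hS4
lemma a1_eq : a1 = C*1 - S*0 := by unfold a1; ring
lemma b1_eq : b1 = C*0 + S*1 := by unfold b1; ring

lemma hb5 : b5 = 1 := by
  unfold b5 b4 a4 b3 a3 b2 a2 b1 a1
  linear_combination 5*S*hC4 - 10*S*hC2S2 + S*hS4 + (1/4)*hr5 + ((1+r5)/4) * hSdef

lemma triple_what (hn : 3 ≤ n) {w : Vn n → ℝ}
    (hsum : ∀ b : OrthonormalBasis (Fin n) ℂ (Vn n), ∑ i, w (b i) = 1)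
    (g : Fin n → Vn n) (hg : Orthonormal ℂ g)
    (hg0 : ∀ i : Fin n, 3 ≤ (i : ℕ) → w (g i) = 0)
    (x y z : Vn n) (hx : x ≠ 0) (hy : y ≠ 0) (hz : z ≠ 0)
    (hxy : ⟪x, y⟫ = 0) (hxz : ⟪x, z⟫ = 0) (hyz : ⟪y, z⟫ = 0)
    (hgx : ∀ i : Fin n, 3 ≤ (i : ℕ) → ⟪g i, x⟫ = 0)
    (hgy : ∀ i : Fin n, 3 ≤ (i : ℕ) → ⟪g i, y⟫ = 0)
    (hgz : ∀ i : Fin n, 3 ≤ (i : ℕ) → ⟪g i, z⟫ = 0) :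
    what w x + what w y + what w z = 1 := by
  apply triple_unit hn hsum g hg hg0 _ _ _
    (norm_normalize hx) (norm_normalize hy) (norm_normalize hz)
  · simp only [inner_smul_left, inner_smul_right, hxy, mul_zero]
  · simp only [inner_smul_left, inner_smul_right, hxz, mul_zero]
  · simp only [inner_smul_left, inner_smul_right, hyz, mul_zero]
  · intro i hi; simp only [inner_smul_right, hgx i hi, mul_zero]
  · intro i hi; simp only [inner_smul_right, hgy i hi, mul_zero]
  · intro i hi; simp only [inner_smul_right, hgz i hi, mul_zero]

set_option maxHeartbeats 2000000 in
/-- The key propagation step: if `w` is 1 on `e1`, it is 1 on `cos 18° e1 + sin 18° e2`. -/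
lemma step (hn : 3 ≤ n) {w : Vn n → ℝ}
    (h01 : ∀ x : Vn n, ‖x‖ = 1 → w x = 0 ∨ w x = 1)
    (hsum : ∀ b : OrthonormalBasis (Fin n) ℂ (Vn n), ∑ i, w (b i) = 1)
    (g : Fin n → Vn n) (hg : Orthonormal ℂ g)
    (hg0 : ∀ i : Fin n, 3 ≤ (i : ℕ) → w (g i) = 0)
    (e1 e2 e3 : Vn n)
    (h11 : ⟪e1, e1⟫ = 1) (h22 : ⟪e2, e2⟫ = 1) (h33 : ⟪e3, e3⟫ = 1)
    (h12 : ⟪e1, e2⟫ = 0) (h13 : ⟪e1, e3⟫ = 0) (h23 : ⟪e2, e3⟫ = 0)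
    (hge1 : ∀ i : Fin n, 3 ≤ (i : ℕ) → ⟪g i, e1⟫ = 0)
    (hge2 : ∀ i : Fin n, 3 ≤ (i : ℕ) → ⟪g i, e2⟫ = 0)
    (hge3 : ∀ i : Fin n, 3 ≤ (i : ℕ) → ⟪g i, e3⟫ = 0)
    (h1 : what w e1 = 1) :
    what w ((C : ℂ) • e1 + (S : ℂ) • e2) = 1 := by
  set K : ℝ → ℝ → ℝ → Vn n :=
    fun a b c => ((a : ℝ) : ℂ) • e1 + ((b : ℝ) : ℂ) • e2 + ((c : ℝ) : ℂ) • e3 with hK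
  have kinner : ∀ a1 a2 a3 b1 b2 b3 : ℝ,
      ⟪K a1 a2 a3, K b1 b2 b3⟫ = ((a1*b1 + a2*b2 + a3*b3 : ℝ) : ℂ) :=
    fun a1 a2 a3 b1 b2 b3 => inner_combo e1 e2 e3 h11 h22 h33 h12 h13 h23 a1 a2 a3 b1 b2 b3
  have kzero : ∀ {a1 a2 a3 b1 b2 b3 : ℝ}, a1*b1 + a2*b2 + a3*b3 = 0 →
      ⟪K a1 a2 a3, K b1 b2 b3⟫ = 0 := by
    intro a1 a2 a3 b1 b2 b3 h
    rw [kinner, h]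
    norm_num
  have kne : ∀ {a1 a2 a3 : ℝ}, 0 < a1*a1 + a2*a2 + a3*a3 → K a1 a2 a3 ≠ 0 := by
    intro a1 a2 a3 hpos h0
    have h2 := kinner a1 a2 a3 a1 a2 a3
    rw [h0, inner_zero_left] at h2
    have := Complex.ofReal_eq_zero.mp h2.symm
    linarith
  have kg : ∀ (i : Fin n), 3 ≤ (i : ℕ) → ∀ a1 a2 a3 : ℝ, ⟪g i, K a1 a2 a3⟫ = 0 := by
    intro i hi a1 a2 a3
    simp only [hK, inner_add_right, inner_smul_right, hge1 i hi, hge2 i hi, hge3 i hi,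
      mul_zero, add_zero]
  have trip : ∀ a1 a2 a3 b1 b2 b3 c1 c2 c3 : ℝ,
      0 < a1*a1 + a2*a2 + a3*a3 → 0 < b1*b1 + b2*b2 + b3*b3 → 0 < c1*c1 + c2*c2 + c3*c3 →
      a1*b1 + a2*b2 + a3*b3 = 0 → a1*c1 + a2*c2 + a3*c3 = 0 → b1*c1 + b2*c2 + b3*c3 = 0 →
      what w (K a1 a2 a3) + what w (K b1 b2 b3) + what w (K c1 c2 c3) = 1 := by
    intro a1 a2 a3 b1 b2 b3 c1 c2 c3 ha hb hc hab hac hbc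
    exact triple_what hn hsum g hg hg0 _ _ _ (kne ha) (kne hb) (kne hc)
      (kzero hab) (kzero hac) (kzero hbc)
      (fun i hi => kg i hi _ _ _) (fun i hi => kg i hi _ _ _) (fun i hi => kg i hi _ _ _)
  have t01 : ∀ a1 a2 a3 : ℝ, 0 < a1*a1 + a2*a2 + a3*a3 →
      what w (K a1 a2 a3) = 0 ∨ what w (K a1 a2 a3) = 1 :=
    fun a1 a2 a3 h => what01 h01 (kne h)
  have hKe1 : K 1 0 0 = e1 := by simp [hK]
  have hKe2 : K 0 1 0 = e2 := by simp [hK]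
  have hKe3 : K 0 0 1 = e3 := by simp [hK]
  have hKq : K C S 0 = (C : ℂ) • e1 + (S : ℂ) • e2 := by simp [hK]
  rw [← hKq]
  -- positivity facts
  have n100 : (0:ℝ) < 1*1 + 0*0 + 0*0 := by norm_num
  have n010 : (0:ℝ) < 0*0 + 1*1 + 0*0 := by norm_num
  have n001 : (0:ℝ) < 0*0 + 0*0 + 1*1 := by norm_num
  have nq : (0:ℝ) < C*C + S*S + 0*0 := by nlinarith [hCpos, hSpos]
  have nqt : (0:ℝ) < (-S)*(-S) + C*C + 0*0 := by nlinarith [hCpos, hSpos]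
  have nu1 : (0:ℝ) < 0*0 + bb*bb + mu*mu := by nlinarith [hbbpos, hmupos]
  have nub1 : (0:ℝ) < 0*0 + (-mu)*(-mu) + bb*bb := by nlinarith [hbbpos, hmupos]
  have nu2 : (0:ℝ) < 0*0 + bb*bb + (-mu)*(-mu) := by nlinarith [hbbpos, hmupos]
  have nub2 : (0:ℝ) < 0*0 + mu*mu + bb*bb := by nlinarith [hbbpos, hmupos]
  have nv1 : (0:ℝ) < (mu*C)*(mu*C) + (mu*S)*(mu*S) + (-(bb*S))*(-(bb*S)) := by
    nlinarith [mul_pos (mul_pos hmupos hCpos) (mul_pos hmupos hCpos),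
      mul_self_nonneg (mu*S), mul_self_nonneg (bb*S)]
  have nv2 : (0:ℝ) < (-(mu*C))*(-(mu*C)) + (-(mu*S))*(-(mu*S)) + (-(bb*S))*(-(bb*S)) := by
    nlinarith [mul_pos (mul_pos hmupos hCpos) (mul_pos hmupos hCpos),
      mul_self_nonneg (mu*S), mul_self_nonneg (bb*S)]
  have nx1 : (0:ℝ) < (-(bb*S*C))*(-(bb*S*C)) + (-(bb*S^2))*(-(bb*S^2)) + (-mu)*(-mu) := by
    nlinarith [mul_pos hmupos hmupos, mul_self_nonneg (bb*S*C), mul_self_nonneg (bb*S^2)]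
  have nx2 : (0:ℝ) < (-(bb*S*C))*(-(bb*S*C)) + (-(bb*S^2))*(-(bb*S^2)) + mu*mu := by
    nlinarith [mul_pos hmupos hmupos, mul_self_nonneg (bb*S*C), mul_self_nonneg (bb*S^2)]
  have nr1 : (0:ℝ) < (-S)*(-S) + (mu^2*C)*(mu^2*C) + (-(bb*mu*C))*(-(bb*mu*C)) := by
    nlinarith [mul_pos hSpos hSpos, mul_self_nonneg (mu^2*C), mul_self_nonneg (bb*mu*C)]
  have nr2 : (0:ℝ) < (-S)*(-S) + (mu^2*C)*(mu^2*C) + (bb*mu*C)*(bb*mu*C) := by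
    nlinarith [mul_pos hSpos hSpos, mul_self_nonneg (mu^2*C), mul_self_nonneg (bb*mu*C)]
  have hP : (0:ℝ) < 2*bb*mu*C*S := by
    nlinarith [mul_pos (mul_pos (mul_pos hbbpos hmupos) hCpos) hSpos]
  have nr3 : (0:ℝ) < (2*bb*mu^3*C^2)*(2*bb*mu^3*C^2) + (2*bb*mu*C*S)*(2*bb*mu*C*S) + 0*0 := by
    nlinarith [mul_pos hP hP, mul_self_nonneg (2*bb*mu^3*C^2)]
  -- T1 : w-values of e2 e3 are 0
  have hT1 := trip 1 0 0 0 1 0 0 0 1 n100 n010 n001 (by ring) (by ring) (by ring)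
  rw [hKe1, hKe2, hKe3, h1] at hT1
  have m2 := t01 0 1 0 n010
  have m3 := t01 0 0 1 n001
  rw [hKe2] at m2
  rw [hKe3] at m3
  have hwe2 : what w e2 = 0 := by rcases m2 with h | h <;> rcases m3 with h' | h' <;> linarith
  have hwe3 : what w e3 = 0 := by rcases m2 with h | h <;> rcases m3 with h' | h' <;> linarith
  -- suppose the conclusion fails
  by_contra hcon
  have hq0 : what w (K C S 0) = 0 := (t01 C S 0 nq).resolve_right hcon
  -- T2 : the orthogonal direction gets value 1
  have hT2 := trip C S 0 (-S) C 0 0 0 1 nq nqt n001 (by ring) (by ring) (by ring)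
  rw [hKe3] at hT2
  have hqt1 : what w (K (-S) C 0) = 1 := by linarith
  -- T3, T4 : u1, u2 get value 0
  have hT3 := trip 1 0 0 0 bb mu 0 (-mu) bb n100 nu1 nub1 (by ring) (by ring) (by ring)
  rw [hKe1, h1] at hT3
  have mu1 := t01 0 bb mu nu1
  have mub1 := t01 0 (-mu) bb nub1
  have hu1 : what w (K 0 bb mu) = 0 := by
    rcases mu1 with h | h <;> rcases mub1 with h' | h' <;> linarith
  have hT4 := trip 1 0 0 0 bb (-mu) 0 mu bb n100 nu2 nub2 (by ring) (by ring) (by ring)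
  rw [hKe1, h1] at hT4
  have mu2 := t01 0 bb (-mu) nu2
  have mub2 := t01 0 mu bb nub2
  have hu2 : what w (K 0 bb (-mu)) = 0 := by
    rcases mu2 with h | h <;> rcases mub2 with h' | h' <;> linarith
  -- T5, T6 : v1, v2 get value 0
  have hT5 := trip (-S) C 0 (mu*C) (mu*S) (-(bb*S)) (-(bb*S*C)) (-(bb*S^2)) (-mu)
    nqt nv1 nx1 (by ring) (by ring) (by linear_combination (-(bb*mu*S))*hCS)
  have mv1 := t01 (mu*C) (mu*S) (-(bb*S)) nv1
  have mx1 := t01 (-(bb*S*C)) (-(bb*S^2)) (-mu) nx1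
  have hv1 : what w (K (mu*C) (mu*S) (-(bb*S))) = 0 := by
    rcases mv1 with h | h <;> rcases mx1 with h' | h' <;> linarith
  have hT6 := trip (-S) C 0 (-(mu*C)) (-(mu*S)) (-(bb*S)) (-(bb*S*C)) (-(bb*S^2)) mu
    nqt nv2 nx2 (by ring) (by ring) (by linear_combination (bb*mu*S)*hCS)
  have mv2 := t01 (-(mu*C)) (-(mu*S)) (-(bb*S)) nv2
  have mx2 := t01 (-(bb*S*C)) (-(bb*S^2)) mu nx2
  have hv2 : what w (K (-(mu*C)) (-(mu*S)) (-(bb*S))) = 0 := by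
    rcases mv2 with h | h <;> rcases mx2 with h' | h' <;> linarith
  -- T7, T8 : r1, r2 get value 1
  have hT7 := trip 0 bb mu (mu*C) (mu*S) (-(bb*S)) (-S) (mu^2*C) (-(bb*mu*C))
    nu1 nv1 nr1 (by ring) (by ring) (by linear_combination (mu*S*C)*hBM)
  have hr1 : what w (K (-S) (mu^2*C) (-(bb*mu*C))) = 1 := by linarith
  have hT8 := trip 0 bb (-mu) (-(mu*C)) (-(mu*S)) (-(bb*S)) (-S) (mu^2*C) (bb*mu*C)
    nu2 nv2 nr2 (by ring) (by ring) (by linear_combination (-(mu*S*C))*hBM)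
  have hr2 : what w (K (-S) (mu^2*C) (bb*mu*C)) = 1 := by linarith
  -- T9 : contradiction
  have hT9 := trip (-S) (mu^2*C) (-(bb*mu*C)) (-S) (mu^2*C) (bb*mu*C)
    (2*bb*mu^3*C^2) (2*bb*mu*C*S) 0
    nr1 nr2 nr3 (by linear_combination hkey) (by ring) (by ring)
  have m9 := t01 (2*bb*mu^3*C^2) (2*bb*mu*C*S) 0 nr3
  rcases m9 with h | h <;> linarith

lemma rot_rep (u0 u1 : Vn n) (a b : ℝ) :
    (C : ℂ) • (((a : ℝ) : ℂ) • u0 + ((b : ℝ) : ℂ) • u1)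
      + (S : ℂ) • (((-b : ℝ) : ℂ) • u0 + ((a : ℝ) : ℂ) • u1)
      = ((C*a - S*b : ℝ) : ℂ) • u0 + ((C*b + S*a : ℝ) : ℂ) • u1 := by
  match_scalars <;> push_cast <;> ring

lemma rot_rep' (u0 u1 : Vn n) (a b : ℝ) :
    ((-S : ℝ) : ℂ) • (((a : ℝ) : ℂ) • u0 + ((b : ℝ) : ℂ) • u1)
      + (C : ℂ) • (((-b : ℝ) : ℂ) • u0 + ((a : ℝ) : ℂ) • u1)
      = ((-(C*b + S*a) : ℝ) : ℂ) • u0 + ((C*a - S*b : ℝ) : ℂ) • u1 := by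
  match_scalars <;> push_cast <;> ring

lemma chain_step (hn : 3 ≤ n) {w : Vn n → ℝ}
    (h01 : ∀ x : Vn n, ‖x‖ = 1 → w x = 0 ∨ w x = 1)
    (hsum : ∀ b : OrthonormalBasis (Fin n) ℂ (Vn n), ∑ i, w (b i) = 1)
    (g : Fin n → Vn n) (hg : Orthonormal ℂ g)
    (hg0 : ∀ i : Fin n, 3 ≤ (i : ℕ) → w (g i) = 0)
    (u0 u1 e3 : Vn n) (h33 : ⟪e3, e3⟫ = 1)
    (hge3 : ∀ i : Fin n, 3 ≤ (i : ℕ) → ⟪g i, e3⟫ = 0)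
    (a b a' b' : ℝ) (ha' : a' = C*a - S*b) (hb' : b' = C*b + S*a)
    (h11 : ⟪((a : ℝ) : ℂ) • u0 + ((b : ℝ) : ℂ) • u1,
            ((a : ℝ) : ℂ) • u0 + ((b : ℝ) : ℂ) • u1⟫ = 1)
    (h22 : ⟪((-b : ℝ) : ℂ) • u0 + ((a : ℝ) : ℂ) • u1,
            ((-b : ℝ) : ℂ) • u0 + ((a : ℝ) : ℂ) • u1⟫ = 1)
    (h12 : ⟪((a : ℝ) : ℂ) • u0 + ((b : ℝ) : ℂ) • u1,
            ((-b : ℝ) : ℂ) • u0 + ((a : ℝ) : ℂ) • u1⟫ = 0)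
    (h13 : ⟪((a : ℝ) : ℂ) • u0 + ((b : ℝ) : ℂ) • u1, e3⟫ = 0)
    (h23 : ⟪((-b : ℝ) : ℂ) • u0 + ((a : ℝ) : ℂ) • u1, e3⟫ = 0)
    (hgeP : ∀ i : Fin n, 3 ≤ (i : ℕ) → ⟪g i, ((a : ℝ) : ℂ) • u0 + ((b : ℝ) : ℂ) • u1⟫ = 0)
    (hgeQ : ∀ i : Fin n, 3 ≤ (i : ℕ) → ⟪g i, ((-b : ℝ) : ℂ) • u0 + ((a : ℝ) : ℂ) • u1⟫ = 0)
    (h1 : what w (((a : ℝ) : ℂ) • u0 + ((b : ℝ) : ℂ) • u1) = 1) :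
    what w (((a' : ℝ) : ℂ) • u0 + ((b' : ℝ) : ℂ) • u1) = 1 ∧
    ⟪((a' : ℝ) : ℂ) • u0 + ((b' : ℝ) : ℂ) • u1,
      ((a' : ℝ) : ℂ) • u0 + ((b' : ℝ) : ℂ) • u1⟫ = 1 ∧
    ⟪((-b' : ℝ) : ℂ) • u0 + ((a' : ℝ) : ℂ) • u1,
      ((-b' : ℝ) : ℂ) • u0 + ((a' : ℝ) : ℂ) • u1⟫ = 1 ∧
    ⟪((a' : ℝ) : ℂ) • u0 + ((b' : ℝ) : ℂ) • u1,
      ((-b' : ℝ) : ℂ) • u0 + ((a' : ℝ) : ℂ) • u1⟫ = 0 ∧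
    ⟪((a' : ℝ) : ℂ) • u0 + ((b' : ℝ) : ℂ) • u1, e3⟫ = 0 ∧
    ⟪((-b' : ℝ) : ℂ) • u0 + ((a' : ℝ) : ℂ) • u1, e3⟫ = 0 ∧
    (∀ i : Fin n, 3 ≤ (i : ℕ) → ⟪g i, ((a' : ℝ) : ℂ) • u0 + ((b' : ℝ) : ℂ) • u1⟫ = 0) ∧
    (∀ i : Fin n, 3 ≤ (i : ℕ) → ⟪g i, ((-b' : ℝ) : ℂ) • u0 + ((a' : ℝ) : ℂ) • u1⟫ = 0) := by
  subst ha' hb'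
  set P : Vn n := ((a : ℝ) : ℂ) • u0 + ((b : ℝ) : ℂ) • u1 with hPdef
  set Q : Vn n := ((-b : ℝ) : ℂ) • u0 + ((a : ℝ) : ℂ) • u1 with hQdef
  have h21 : ⟪((-b : ℝ) : ℂ) • u0 + ((a : ℝ) : ℂ) • u1,
      ((a : ℝ) : ℂ) • u0 + ((b : ℝ) : ℂ) • u1⟫ = 0 := inner_swap_zero h12
  have e1 : (C : ℂ) • P + (S : ℂ) • Q
      = ((C*a - S*b : ℝ) : ℂ) • u0 + ((C*b + S*a : ℝ) : ℂ) • u1 := by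
    rw [hPdef, hQdef]; exact rot_rep u0 u1 a b
  have e2 : ((-S : ℝ) : ℂ) • P + (C : ℂ) • Q
      = ((-(C*b + S*a) : ℝ) : ℂ) • u0 + ((C*a - S*b : ℝ) : ℂ) • u1 := by
    rw [hPdef, hQdef]; exact rot_rep' u0 u1 a b
  have hCSc : (C : ℂ)^2 + (S : ℂ)^2 = 1 := by exact_mod_cast congrArg (fun r : ℝ => (r : ℂ)) hCS
  have hs := step hn h01 hsum g hg hg0 _ _ _ h11 h22 h33 h12 h13 h23 hgeP hgeQ hge3 h1
  rw [e1] at hs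
  refine ⟨hs, ?_, ?_, ?_, ?_, ?_, ?_, ?_⟩
  · rw [← e1]
    simp only [inner_add_left, inner_add_right, inner_smul_left, inner_smul_right,
      Complex.conj_ofReal, h11, h22, h12, h21, inner_swap_zero h12]
    push_cast
    linear_combination hCSc
  · rw [← e2]
    simp only [inner_add_left, inner_add_right, inner_smul_left, inner_smul_right,
      Complex.conj_ofReal, h11, h22, h12, h21, inner_swap_zero h12]
    push_cast
    linear_combination hCSc
  · rw [← e1, ← e2]
    simp only [inner_add_left, inner_add_right, inner_smul_left, inner_smul_right,
      Complex.conj_ofReal, h11, h22, h12, h21, inner_swap_zero h12]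
    push_cast
    ring
  · rw [← e1]
    simp only [inner_add_left, inner_smul_left, Complex.conj_ofReal, h13, h23, mul_zero, add_zero]
  · rw [← e2]
    simp only [inner_add_left, inner_smul_left, Complex.conj_ofReal, h13, h23, mul_zero, add_zero]
  · intro i hi
    rw [← e1]
    simp only [inner_add_right, inner_smul_right, hgeP i hi, hgeQ i hi, mul_zero, add_zero]
  · intro i hi
    rw [← e2]
    simp only [inner_add_right, inner_smul_right, hgeP i hi, hgeQ i hi, mul_zero, add_zero]

end
end KSP

section Main
open KSP

local notation "⟪" x ", " y "⟫" => @inner ℂ _ _ x y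

open scoped BigOperators

/-- Kochen–Specker theorem for `ℂⁿ`, `n ≥ 3`: there is no `{0,1}`-valued
function on unit vectors whose values sum to 1 over every orthonormal basis. -/
theorem kochen_specker_complex (n : ℕ) (hn : 3 ≤ n) :
    ¬ ∃ w : EuclideanSpace ℂ (Fin n) → ℝ,
      (∀ x : EuclideanSpace ℂ (Fin n), ‖x‖ = 1 → w x = 0 ∨ w x = 1) ∧
      (∀ b : OrthonormalBasis (Fin n) ℂ (EuclideanSpace ℂ (Fin n)),
        ∑ i, w (b i) = 1) := by
  rintro ⟨w, h01, hsum⟩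
  classical
  have h01' : ∀ x : Vn n, ‖x‖ = 1 → w x = 0 ∨ w x = 1 := h01
  have hsum' : ∀ b : OrthonormalBasis (Fin n) ℂ (Vn n), ∑ i, w (b i) = 1 := hsum
  set b0 : OrthonormalBasis (Fin n) ℂ (Vn n) := EuclideanSpace.basisFun (Fin n) ℂ with hb0
  obtain ⟨j, hj1, hj0⟩ := exists_one h01' hsum' b0
  set I0 : Fin n := ⟨0, by omega⟩ with hI0
  set I1 : Fin n := ⟨1, by omega⟩ with hI1
  set I2 : Fin n := ⟨2, by omega⟩ with hI2
  set g : Fin n → Vn n := fun i => b0 (Equiv.swap j I0 i) with hgdef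
  have hg : Orthonormal ℂ g := b0.orthonormal.comp _ (Equiv.swap j I0).injective
  have hgI0 : w (g I0) = 1 := by
    have h : g I0 = b0 j := by
      rw [hgdef]
      simp [Equiv.swap_apply_right]
    rw [h]; exact hj1
  have hgne : ∀ i : Fin n, i ≠ I0 → w (g i) = 0 := by
    intro i hi
    exact hj0 _ (fun hswap => hi (by
      have h2 := congrArg (Equiv.swap j I0) hswap
      rwa [Equiv.swap_apply_self, Equiv.swap_apply_left] at h2))
  have hg0 : ∀ i : Fin n, 3 ≤ (i : ℕ) → w (g i) = 0 := by
    intro i hi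
    exact hgne i (by simp [hI0, Fin.ext_iff]; omega)
  have h11 : ⟪g I0, g I0⟫ = 1 := inner_self_one (hg.1 I0)
  have h22 : ⟪g I1, g I1⟫ = 1 := inner_self_one (hg.1 I1)
  have h33 : ⟪g I2, g I2⟫ = 1 := inner_self_one (hg.1 I2)
  have h12 : ⟪g I0, g I1⟫ = 0 := hg.2 (by simp [hI0, hI1, Fin.ext_iff])
  have h13 : ⟪g I0, g I2⟫ = 0 := hg.2 (by simp [hI0, hI2, Fin.ext_iff])
  have h23 : ⟪g I1, g I2⟫ = 0 := hg.2 (by simp [hI1, hI2, Fin.ext_iff])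
  have hge1 : ∀ i : Fin n, 3 ≤ (i : ℕ) → ⟪g i, g I0⟫ = 0 := by
    intro i hi
    exact hg.2 (by simp [hI0, Fin.ext_iff]; omega)
  have hge2 : ∀ i : Fin n, 3 ≤ (i : ℕ) → ⟪g i, g I1⟫ = 0 := by
    intro i hi
    exact hg.2 (by simp [hI1, Fin.ext_iff]; omega)
  have hge3 : ∀ i : Fin n, 3 ≤ (i : ℕ) → ⟪g i, g I2⟫ = 0 := by
    intro i hi
    exact hg.2 (by simp [hI2, Fin.ext_iff]; omega)
  have hw1 : what w (g I0) = 1 := by rw [what_unit (hg.1 I0)]; exact hgI0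
  -- initial frame in coordinate form
  have hP0 : ((1:ℝ):ℂ) • g I0 + ((0:ℝ):ℂ) • g I1 = g I0 := by norm_num
  have hQ0 : ((-(0:ℝ):ℝ):ℂ) • g I0 + ((1:ℝ):ℂ) • g I1 = g I1 := by norm_num
  have c11 : ⟪((1:ℝ):ℂ) • g I0 + ((0:ℝ):ℂ) • g I1,
      ((1:ℝ):ℂ) • g I0 + ((0:ℝ):ℂ) • g I1⟫ = 1 := by rw [hP0]; exact h11
  have c22 : ⟪((-(0:ℝ):ℝ):ℂ) • g I0 + ((1:ℝ):ℂ) • g I1,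
      ((-(0:ℝ):ℝ):ℂ) • g I0 + ((1:ℝ):ℂ) • g I1⟫ = 1 := by rw [hQ0]; exact h22
  have c12 : ⟪((1:ℝ):ℂ) • g I0 + ((0:ℝ):ℂ) • g I1,
      ((-(0:ℝ):ℝ):ℂ) • g I0 + ((1:ℝ):ℂ) • g I1⟫ = 0 := by rw [hP0, hQ0]; exact h12
  have c13 : ⟪((1:ℝ):ℂ) • g I0 + ((0:ℝ):ℂ) • g I1, g I2⟫ = 0 := by rw [hP0]; exact h13
  have c23 : ⟪((-(0:ℝ):ℝ):ℂ) • g I0 + ((1:ℝ):ℂ) • g I1, g I2⟫ = 0 := by rw [hQ0]; exact h23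
  have cg1 : ∀ i : Fin n, 3 ≤ (i : ℕ) →
      ⟪g i, ((1:ℝ):ℂ) • g I0 + ((0:ℝ):ℂ) • g I1⟫ = 0 := by
    intro i hi; rw [hP0]; exact hge1 i hi
  have cg2 : ∀ i : Fin n, 3 ≤ (i : ℕ) →
      ⟪g i, ((-(0:ℝ):ℝ):ℂ) • g I0 + ((1:ℝ):ℂ) • g I1⟫ = 0 := by
    intro i hi; rw [hQ0]; exact hge2 i hi
  have cw : what w (((1:ℝ):ℂ) • g I0 + ((0:ℝ):ℂ) • g I1) = 1 := by rw [hP0]; exact hw1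
  have c1 := chain_step hn h01' hsum' g hg hg0 (g I0) (g I1) (g I2) h33 hge3
    1 0 a1 b1 a1_eq b1_eq c11 c22 c12 c13 c23 cg1 cg2 cw
  obtain ⟨s1, d11, d22, d12, d13, d23, dg1, dg2⟩ := c1
  have c2 := chain_step hn h01' hsum' g hg hg0 (g I0) (g I1) (g I2) h33 hge3
    a1 b1 a2 b2 rfl rfl d11 d22 d12 d13 d23 dg1 dg2 s1
  obtain ⟨s2, f11, f22, f12, f13, f23, fg1, fg2⟩ := c2
  have c3 := chain_step hn h01' hsum' g hg hg0 (g I0) (g I1) (g I2) h33 hge3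
    a2 b2 a3 b3 rfl rfl f11 f22 f12 f13 f23 fg1 fg2 s2
  obtain ⟨s3, k11, k22, k12, k13, k23, kg1, kg2⟩ := c3
  have c4 := chain_step hn h01' hsum' g hg hg0 (g I0) (g I1) (g I2) h33 hge3
    a3 b3 a4 b4 rfl rfl k11 k22 k12 k13 k23 kg1 kg2 s3
  obtain ⟨s4, l11, l22, l12, l13, l23, lg1, lg2⟩ := c4
  have c5 := chain_step hn h01' hsum' g hg hg0 (g I0) (g I1) (g I2) h33 hge3
    a4 b4 a5 b5 rfl rfl l11 l22 l12 l13 l23 lg1 lg2 s4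
  obtain ⟨s5, -, -, -, -, -, -, -⟩ := c5
  have hfin : ((a5 : ℝ) : ℂ) • g I0 + ((b5 : ℝ) : ℂ) • g I1 = g I1 := by
    rw [ha5, hb5]
    norm_num
  rw [hfin] at s5
  have hzero : w (g I1) = 0 := hgne I1 (by simp [hI0, hI1, Fin.ext_iff])
  rw [what_unit (hg.1 I1), hzero] at s5
  norm_num at s5

end Main
end

section
/- No-cloning theorem: there is no unitary operator U on H ⊗ H and fixed unit vector e ∈ H such that U(ψ ⊗ e) = ψ ⊗ ψ for all unit vectors ψ ∈ H, whenever dim(H) ≥ 2. -/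
/-- The tensor product `ψ ⊗ φ` of two vectors of `ℂⁿ`, realized concretely in
`ℂ^(n×n)` with components `(ψ ⊗ φ)(i,j) = ψ i * φ j`. -/
noncomputable def tensorVec {n : ℕ} (ψ φ : EuclideanSpace ℂ (Fin n)) :
    EuclideanSpace ℂ (Fin n × Fin n) :=
  (WithLp.equiv 2 (Fin n × Fin n → ℂ)).symm (fun p => ψ p.1 * φ p.2)

lemma inner_tensorVec {n : ℕ} (a b c d : EuclideanSpace ℂ (Fin n)) :
    @inner ℂ _ _ (tensorVec a c) (tensorVec b d)
      = @inner ℂ _ _ a b * @inner ℂ _ _ c d := by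
  simp only [tensorVec, PiLp.inner_apply, WithLp.equiv_symm_apply, PiLp.toLp_apply, RCLike.inner_apply,
    map_mul]
  rw [Finset.sum_mul_sum, Fintype.sum_prod_type]
  exact Finset.sum_congr rfl fun i _ => Finset.sum_congr rfl fun j _ => by ring

/-- No-cloning theorem: for `dim H ≥ 2` there is no unitary `U` on `H ⊗ H` and
fixed unit vector `e` with `U (ψ ⊗ e) = ψ ⊗ ψ` for all unit vectors `ψ`. -/
theorem no_cloning (n : ℕ) (hn : 2 ≤ n) :
    ¬ ∃ (U : EuclideanSpace ℂ (Fin n × Fin n) ≃ₗᵢ[ℂ] EuclideanSpace ℂ (Fin n × Fin n))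
        (e : EuclideanSpace ℂ (Fin n)), ‖e‖ = 1 ∧
      ∀ ψ : EuclideanSpace ℂ (Fin n), ‖ψ‖ = 1 →
        U (tensorVec ψ e) = tensorVec ψ ψ := by
  rintro ⟨U, e, he, hU⟩
  set c : ℂ := (((Real.sqrt 2)⁻¹ : ℝ) : ℂ) with hcdef
  have hc2 : c * c = 1 / 2 := by
    simp only [c, ← Complex.ofReal_mul]
    rw [← mul_inv, Real.mul_self_sqrt (by norm_num)]
    norm_num
  have hcconj : (starRingEnd ℂ) c = c := Complex.conj_ofReal _
  have i0 : Fin n := ⟨0, by omega⟩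
  have i1 : Fin n := ⟨1, by omega⟩
  set ψ : EuclideanSpace ℂ (Fin n) := EuclideanSpace.single ⟨0, by omega⟩ 1
  set φ : EuclideanSpace ℂ (Fin n) := EuclideanSpace.single ⟨1, by omega⟩ 1
  set v : EuclideanSpace ℂ (Fin n) := c • (ψ + φ)
  have hψψ : @inner ℂ _ _ ψ ψ = 1 := by
    simp [ψ, EuclideanSpace.inner_single_left, EuclideanSpace.single_apply]
  have hψφ : @inner ℂ _ _ ψ φ = 0 := by
    simp [ψ, φ, EuclideanSpace.inner_single_left, EuclideanSpace.single_apply]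
  have hφψ : @inner ℂ _ _ φ ψ = 0 := by
    simp [ψ, φ, EuclideanSpace.inner_single_left, EuclideanSpace.single_apply]
  have hφφ : @inner ℂ _ _ φ φ = 1 := by
    simp [φ, EuclideanSpace.inner_single_left, EuclideanSpace.single_apply]
  have hψnorm : ‖ψ‖ = 1 := by simp [ψ]
  have hvv : @inner ℂ _ _ v v = 1 := by
    simp only [v, inner_smul_left, inner_smul_right, inner_add_left, inner_add_right,
      hψψ, hψφ, hφψ, hφφ, hcconj]
    linear_combination 2 * hc2
  have hvnorm : ‖v‖ = 1 := by
    have h := inner_self_eq_norm_sq (𝕜 := ℂ) (x := v)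
    rw [hvv] at h
    have h2 : ‖v‖ ^ 2 = 1 := by simpa using h.symm
    nlinarith [norm_nonneg v]
  have hee : @inner ℂ _ _ e e = 1 := by
    rw [inner_self_eq_norm_sq_to_K, he]; norm_num
  have hψv : @inner ℂ _ _ ψ v = c := by
    simp [v, inner_smul_right, inner_add_right, hψψ, hψφ, hψnorm]
  have key : @inner ℂ _ _ (tensorVec ψ e) (tensorVec v e)
      = @inner ℂ _ _ (tensorVec ψ ψ) (tensorVec v v) := by
    rw [← hU ψ hψnorm, ← hU v hvnorm, U.inner_map_map]
  rw [inner_tensorVec, inner_tensorVec, hee, hψv] at key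
  have hc : c = 1 / 2 := by linear_combination key + hc2
  rw [hcdef] at hc
  have h3 : ((Real.sqrt 2)⁻¹ : ℝ) = 1 / 2 :=
    Complex.ofReal_inj.mp (by rw [hc]; norm_num)
  have hs : (0:ℝ) < Real.sqrt 2 := Real.sqrt_pos.mpr (by norm_num)
  have h4 : Real.sqrt 2 = 2 := by
    have h5 : Real.sqrt 2 * (1/2) = Real.sqrt 2 * (Real.sqrt 2)⁻¹ := by rw [h3]
    rw [mul_inv_cancel₀ (ne_of_gt hs)] at h5
    linarith
  nlinarith [Real.sq_sqrt (show (0:ℝ) ≤ 2 by norm_num)]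
end

section
/- If a unitary U clones two unit vectors ψ and φ (i.e., U(ψ ⊗ e) = ψ ⊗ ψ and U(φ ⊗ e) = φ ⊗ φ), then ⟨ψ, φ⟩ = ⟨ψ, φ⟩², hence ⟨ψ, φ⟩ ∈ {0, 1}; so only mutually orthogonal or identical states can be cloned by the same unitary. -/
lemma tensorVec_inner {n : ℕ} (a b c d : EuclideanSpace ℂ (Fin n)) :
    (inner ℂ (tensorVec a b) (tensorVec c d) : ℂ) = inner ℂ a c * inner ℂ b d := by
  simp only [tensorVec, EuclideanSpace.inner_eq_star_dotProduct]
  simp [EuclideanSpace.inner_eq_star_dotProduct, dotProduct,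
    Fintype.sum_prod_type, Finset.mul_sum, Finset.sum_mul]
  ring_nf
  rw [Finset.sum_comm]
  congr 1; ext i; congr 1; ext j; ring

/-- If a single unitary clones two unit vectors `ψ` and `φ`, then
`⟨ψ,φ⟩ = ⟨ψ,φ⟩²`, hence `⟨ψ,φ⟩ ∈ {0,1}`: only orthogonal or identical states
can be cloned by the same unitary. -/
theorem cloned_states_orthogonal_or_equal {n : ℕ}
    (U : EuclideanSpace ℂ (Fin n × Fin n) ≃ₗᵢ[ℂ] EuclideanSpace ℂ (Fin n × Fin n))
    (e : EuclideanSpace ℂ (Fin n)) (he : ‖e‖ = 1)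
    (ψ φ : EuclideanSpace ℂ (Fin n)) (hψ : ‖ψ‖ = 1) (hφ : ‖φ‖ = 1)
    (hcψ : U (tensorVec ψ e) = tensorVec ψ ψ)
    (hcφ : U (tensorVec φ e) = tensorVec φ φ) :
    (inner ℂ ψ φ : ℂ) = (inner ℂ ψ φ : ℂ) ^ 2 ∧
      ((inner ℂ ψ φ : ℂ) = 0 ∨ (inner ℂ ψ φ : ℂ) = 1) := by
  have hee : (inner ℂ e e : ℂ) = 1 := by
    rw [inner_self_eq_norm_sq_to_K, he]; norm_num
  have h := U.inner_map_map (tensorVec ψ e) (tensorVec φ e)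
  rw [hcψ, hcφ, tensorVec_inner, tensorVec_inner, hee, mul_one] at h
  have h1 : (inner ℂ ψ φ : ℂ) = (inner ℂ ψ φ : ℂ) ^ 2 := by
    linear_combination -h
  refine ⟨h1, ?_⟩
  have h2 : (inner ℂ ψ φ : ℂ) * ((inner ℂ ψ φ : ℂ) - 1) = 0 := by linear_combination h
  rcases mul_eq_zero.1 h2 with h0 | h0
  · exact Or.inl h0
  · exact Or.inr (sub_eq_zero.1 h0)
end

section
/- Von Neumann-style no-go for additive dispersion-free states: there is no function v from all self-adjoint n×n complex matrices (n ≥ 2) to ℝ such that v(A + B) = v(A) + v(B) for all self-adjoint A, B (including non-commuting ones) and v(A) ∈ spectrum(A) for all A. -/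
open Matrix

namespace VNNoGo

variable {n : ℕ}

lemma exists_eigenvector (A : Matrix (Fin n) (Fin n) ℂ) {μ : ℂ}
    (h : μ ∈ spectrum ℂ A) : ∃ x : Fin n → ℂ, x ≠ 0 ∧ A.mulVec x = μ • x := by
  rw [spectrum.mem_iff, Matrix.isUnit_iff_isUnit_det, isUnit_iff_ne_zero, not_ne_iff] at h
  obtain ⟨x, hx0, hx⟩ := (Matrix.exists_mulVec_eq_zero_iff).2 h
  refine ⟨x, hx0, ?_⟩
  have h3 : (algebraMap ℂ (Matrix (Fin n) (Fin n) ℂ) μ).mulVec x = μ • x := by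
    rw [Algebra.algebraMap_eq_smul_one, Matrix.smul_mulVec, Matrix.one_mulVec]
  have h2 : (algebraMap ℂ (Matrix (Fin n) (Fin n) ℂ) μ).mulVec x - A.mulVec x = 0 := by
    rw [← Matrix.sub_mulVec]; exact hx
  rw [h3, sub_eq_zero] at h2
  exact h2.symm

lemma spectrum_idem {A : Matrix (Fin n) (Fin n) ℂ} (hA : A * A = A) {μ : ℂ}
    (h : μ ∈ spectrum ℂ A) : μ = 0 ∨ μ = 1 := by
  obtain ⟨x, hx0, hx⟩ := exists_eigenvector A h
  have h2 : (A * A).mulVec x = μ • (μ • x) := by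
    rw [← Matrix.mulVec_mulVec, hx, Matrix.mulVec_smul, hx]
  rw [hA, hx] at h2
  obtain ⟨k, hk⟩ := Function.ne_iff.1 hx0
  have h3 : μ * x k = μ * (μ * x k) := congrFun h2 k
  have h4 : (μ * (μ - 1)) * x k = 0 := by linear_combination -h3
  have hk' : x k ≠ 0 := by simpa using hk
  rcases mul_eq_zero.1 ((mul_eq_zero.1 h4).resolve_right hk') with h6 | h6
  · exact Or.inl h6
  · exact Or.inr (sub_eq_zero.1 h6)

/-- diagonal rank-one projection -/
noncomputable def E (i : Fin n) : Matrix (Fin n) (Fin n) ℂ := single i i 1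

/-- rank-one projection onto span(e_i + e_j)/√2 -/
noncomputable def P (i j : Fin n) : Matrix (Fin n) (Fin n) ℂ :=
  (2 : ℂ)⁻¹ • (single i i 1 + single i j 1 +
    single j i 1 + single j j 1)

lemma stdBasis_conjT (i j : Fin n) :
    (single i j (1 : ℂ))ᴴ = single j i 1 := by
  ext a b
  simp [Matrix.conjTranspose_apply, Matrix.single, and_comm, apply_ite (star : ℂ → ℂ)]

lemma hermE (i : Fin n) : (E i).IsHermitian := by
  unfold Matrix.IsHermitian E
  rw [stdBasis_conjT]

lemma hermP {i j : Fin n} : (P i j).IsHermitian := by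
  unfold Matrix.IsHermitian P
  rw [Matrix.conjTranspose_smul]
  simp only [Matrix.conjTranspose_add, stdBasis_conjT]
  rw [show (star (2 : ℂ)⁻¹) = (2:ℂ)⁻¹ by norm_num]
  congr 1
  abel

lemma idemE (i : Fin n) : E i * E i = E i := by
  unfold E
  rw [Matrix.single_mul_single_same, one_mul]

lemma idemP {i j : Fin n} (hij : i ≠ j) : P i j * P i j = P i j := by
  unfold P
  rw [Matrix.smul_mul, Matrix.mul_smul, smul_smul]
  simp only [add_mul, mul_add, Matrix.single_mul_single_same,
    Matrix.single_mul_single_of_ne, hij, hij.symm, ne_eq, not_false_iff, one_mul]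
  match_scalars <;> norm_num

lemma spectrum_M {i j : Fin n} (hij : i ≠ j) {μ : ℂ}
    (h : μ ∈ spectrum ℂ (E i + P i j)) : μ = 0 ∨ (μ - 1) ^ 2 = 2⁻¹ := by
  obtain ⟨x, hx0, hx⟩ := exists_eigenvector _ h
  have hmv : ∀ k, (E i + P i j).mulVec x k =
      (if k = i then x i else 0) + (2:ℂ)⁻¹ * ((if k = i then x i else 0)
        + (if k = i then x j else 0) + (if k = j then x i else 0) + (if k = j then x j else 0)) := by
    intro k
    simp only [E, P, Matrix.add_mulVec, Matrix.smul_mulVec,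
      Matrix.single_mulVec, Pi.add_apply, Pi.smul_apply,
      Function.update_apply, Pi.zero_apply, one_mul, smul_eq_mul]
    try ring_nf
  have heqi : x i + (2:ℂ)⁻¹ * (x i + x j) = μ * x i := by
    have := congrFun hx i
    rw [hmv i] at this
    simp only [eq_self_iff_true, if_true, if_neg hij, if_neg hij.symm, Pi.smul_apply,
      smul_eq_mul] at this
    linear_combination this
  have heqj : (2:ℂ)⁻¹ * (x i + x j) = μ * x j := by
    have := congrFun hx j
    rw [hmv j] at this
    simp only [eq_self_iff_true, if_true, if_neg hij, if_neg hij.symm, Pi.smul_apply,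
      smul_eq_mul] at this
    linear_combination this
  by_cases hμ : μ = 0
  · exact Or.inl hμ
  right
  have hxk : ∀ k, k ≠ i → k ≠ j → x k = 0 := by
    intro k hki hkj
    have := congrFun hx k
    rw [hmv k] at this
    simp only [if_neg hki, if_neg hkj, Pi.smul_apply, smul_eq_mul] at this
    have : μ * x k = 0 := by linear_combination -this
    exact (mul_eq_zero.1 this).resolve_left hμ
  have hxj : x j ≠ 0 := by
    intro hj
    apply hx0
    have hi : x i = 0 := by
      have h5 : (2:ℂ)⁻¹ * x i = 0 := by
        rw [hj] at heqj; linear_combination heqj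
      linear_combination 2 * h5
    funext k
    by_cases hki : k = i
    · rw [hki]; exact hi
    by_cases hkj : k = j
    · rw [hkj]; exact hj
    · exact hxk k hki hkj
  have hxi : x i = (2 * μ - 1) * x j := by linear_combination 2 * heqj
  rw [hxi] at heqi
  have key : ((μ - 1)^2 - 2⁻¹) * x j = 0 := by linear_combination -heqi / 2
  exact sub_eq_zero.1 ((mul_eq_zero.1 key).resolve_right hxj)

end VNNoGo

/-- Von Neumann-style no-go theorem: for `n ≥ 2` there is no real-valued
function on the self-adjoint `n × n` complex matrices that is additive on all
pairs (including non-commuting ones) and assigns to each matrix an element of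
its spectrum. -/
theorem no_additive_dispersion_free_state (n : ℕ) (hn : 2 ≤ n) :
    ¬ ∃ v : Matrix (Fin n) (Fin n) ℂ → ℝ,
      (∀ A B : Matrix (Fin n) (Fin n) ℂ, A.IsHermitian → B.IsHermitian →
        v (A + B) = v A + v B) ∧
      (∀ A : Matrix (Fin n) (Fin n) ℂ, A.IsHermitian →
        (v A : ℂ) ∈ spectrum ℂ A) := by
  rintro ⟨v, hadd, hspec⟩
  have hv0 : v 0 = 0 := by
    have h := hadd 0 0 Matrix.isHermitian_zero Matrix.isHermitian_zero
    rw [add_zero] at h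
    linarith
  have idemrange : ∀ A : Matrix (Fin n) (Fin n) ℂ, A.IsHermitian → A * A = A →
      v A = 0 ∨ v A = 1 := by
    intro A hA hAA
    rcases VNNoGo.spectrum_idem hAA (hspec A hA) with h | h
    · left; exact_mod_cast h
    · right; exact_mod_cast h
  have hvE : ∀ i : Fin n, v (VNNoGo.E i) = 0 := by
    intro i
    obtain ⟨j, hj⟩ := Fintype.exists_ne_of_one_lt_card
      (by simp only [Fintype.card_fin]; omega) i
    have hij : i ≠ j := hj.symm
    have hE := idemrange _ (VNNoGo.hermE i) (VNNoGo.idemE i)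
    have hP := idemrange _ (VNNoGo.hermP (i := i) (j := j)) (VNNoGo.idemP hij)
    have hsum := hadd _ _ (VNNoGo.hermE i) (VNNoGo.hermP (i := i) (j := j))
    have hs := hspec _ ((VNNoGo.hermE i).add (VNNoGo.hermP (i := i) (j := j)))
    rw [hsum] at hs
    rcases VNNoGo.spectrum_M hij hs with h | h
    · have h' : v (VNNoGo.E i) + v (VNNoGo.P i j) = 0 := by exact_mod_cast h
      rcases hE with h1 | h1 <;> rcases hP with h2 | h2 <;> rw [h1, h2] at h' <;>
        first | exact h1 | norm_num at h'
    · have h' : (v (VNNoGo.E i) + v (VNNoGo.P i j) - 1) ^ 2 = 2⁻¹ := by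
        have hc : (((v (VNNoGo.E i) + v (VNNoGo.P i j) - 1) ^ 2 : ℝ) : ℂ) = ((2⁻¹ : ℝ) : ℂ) := by
          push_cast at h ⊢
          linear_combination h
        exact_mod_cast hc
      rcases hE with h1 | h1 <;> rcases hP with h2 | h2 <;> rw [h1, h2] at h' <;> norm_num at h'
  have hv1 : v 1 = 1 := by
    have hs := hspec 1 Matrix.isHermitian_one
    obtain ⟨x, hx0, hx⟩ := VNNoGo.exists_eigenvector _ hs
    rw [Matrix.one_mulVec] at hx
    obtain ⟨k, hk⟩ := Function.ne_iff.1 hx0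
    have hk' : x k ≠ 0 := by simpa using hk
    have hxx : x k = (v 1 : ℂ) * x k := by
      have := congrFun hx k
      simpa using this
    have h1 : ((v 1 : ℂ) - 1) * x k = 0 := by linear_combination -hxx
    have h2 : (v 1 : ℂ) = 1 := by
      have := (mul_eq_zero.1 h1).resolve_right hk'
      linear_combination this
    exact_mod_cast h2
  have hones : (1 : Matrix (Fin n) (Fin n) ℂ) = ∑ i, VNNoGo.E i := by
    ext a b
    simp only [VNNoGo.E, Matrix.sum_apply, Matrix.single, Matrix.of_apply,
      Matrix.one_apply]
    by_cases hab : a = b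
    · subst hab
      simp
    · rw [if_neg hab]
      refine (Finset.sum_eq_zero ?_).symm
      intro i _
      rw [if_neg]
      rintro ⟨rfl, rfl⟩
      exact hab rfl
  have hsplit : ∀ s : Finset (Fin n),
      (∑ i ∈ s, VNNoGo.E i).IsHermitian ∧ v (∑ i ∈ s, VNNoGo.E i) = ∑ i ∈ s, v (VNNoGo.E i) := by
    intro s
    induction s using Finset.cons_induction with
    | empty => rw [Finset.sum_empty, Finset.sum_empty]; exact ⟨Matrix.isHermitian_zero, hv0⟩
    | cons a s ha ih =>
      rw [Finset.sum_cons, Finset.sum_cons]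
      exact ⟨(VNNoGo.hermE a).add ih.1, by rw [hadd _ _ (VNNoGo.hermE a) ih.1, ih.2]⟩
  have hfin := (hsplit Finset.univ).2
  rw [← hones, hv1] at hfin
  simp only [hvE, Finset.sum_const_zero] at hfin
  norm_num at hfin
end
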